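/- Let n, m be natural numbers with 1 ≤ m ≤ n, let a_1, …, a_n and b_1, …, b_n be real numbers, let v ∈ {−1, +1}, and let λ_a(v) and λ_b(v) denote the Zig-Zag sub-sampling rates built from (a_j) and (b_j) respectively, i.e. λ_a(v) = (n / C(n,m)) Σ_{S ⊆ {1,…,n}, |S| = m} (v · m^{-1} Σ_{j∈S} a_j)_+. Then | λ_a(v) − λ_b(v) | ≤ Σ_{j=1}^{n} | a_j − b_j |. In particular, taking a_j = E^j_i(y) and b_j = E^j_i(x) for either the vanilla sub-sampling or the control-variate decomposition, | λ^n_i(y,v) − λ^n_i(x,v) | ≤ Σ_{j=1}^n | s^j_i(y) − s^j_i(x) |. -/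

import Mathlib

open Finset

/-- The Zig-Zag sub-sampling switching rate with batch size `m` built from reals
`a 0, …, a (n-1)` and direction `v`. -/
noncomputable def subsamplingRate (n m : ℕ) (a : ℕ → ℝ) (v : ℝ) : ℝ :=
  (n : ℝ) / (n.choose m : ℝ) *
    ∑ S ∈ Finset.powersetCard m (Finset.range n),
      max (v * ((m : ℝ)⁻¹ * ∑ j ∈ S, a j)) 0

lemma count_mem_powersetCard (n m : ℕ) (hm : 1 ≤ m) {j : ℕ} (hj : j ∈ Finset.range n) :
    ((Finset.powersetCard m (Finset.range n)).filter (fun S => j ∈ S)).card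
      = (n - 1).choose (m - 1) := by
  have hcard : ((Finset.range n).erase j).card = n - 1 := by
    rw [card_erase_of_mem hj, card_range]
  rw [← hcard, ← card_powersetCard]
  apply Finset.card_bij (fun S _ => S.erase j)
  · intro S hS
    simp only [mem_filter, mem_powersetCard] at hS
    rw [mem_powersetCard]
    exact ⟨erase_subset_erase _ hS.1.1, by rw [card_erase_of_mem hS.2, hS.1.2]⟩
  · intro S hS T hT h
    simp only [mem_filter] at hS hT
    rw [← insert_erase hS.2, ← insert_erase hT.2, h]
  · intro T hT
    rw [mem_powersetCard] at hT
    refine ⟨insert j T, ?_, ?_⟩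
    · simp only [mem_filter, mem_powersetCard]
      have hjT : j ∉ T := fun h => (notMem_erase j _) (hT.1 h)
      refine ⟨⟨?_, ?_⟩, mem_insert_self _ _⟩
      · exact insert_subset hj (hT.1.trans (erase_subset _ _))
      · rw [card_insert_of_notMem hjT, hT.2]
        omega
    · rw [erase_insert (fun h => (notMem_erase j _) (hT.1 h))]

lemma double_count (n m : ℕ) (hm : 1 ≤ m) (f : ℕ → ℝ) :
    ∑ S ∈ Finset.powersetCard m (Finset.range n), ∑ j ∈ S, f j
      = ((n - 1).choose (m - 1) : ℝ) * ∑ j ∈ Finset.range n, f j := by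
  have h1 : ∀ S ∈ Finset.powersetCard m (Finset.range n),
      ∑ j ∈ S, f j = ∑ j ∈ Finset.range n, if j ∈ S then f j else 0 := by
    intro S hS
    rw [Finset.sum_ite_mem, Finset.inter_eq_right.2 (mem_powersetCard.1 hS).1]
  rw [Finset.sum_congr rfl h1, Finset.sum_comm, Finset.mul_sum]
  refine Finset.sum_congr rfl fun j hj => ?_
  rw [← Finset.sum_filter, Finset.sum_const, count_mem_powersetCard n m hm hj,
    nsmul_eq_mul]

/-- Lipschitz bound for sub-sampling rates in terms of the decomposition terms:
`|λ_a(v) − λ_b(v)| ≤ Σ_j |a_j − b_j|`. -/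
theorem subsamplingRate_lipschitz (n m : ℕ) (hm : 1 ≤ m) (hmn : m ≤ n)
    (a b : ℕ → ℝ) (v : ℝ) (hv : v = 1 ∨ v = -1) :
    |subsamplingRate n m a v - subsamplingRate n m b v|
      ≤ ∑ j ∈ Finset.range n, |a j - b j| := by
  have hm0 : (m : ℝ) ≠ 0 := Nat.cast_ne_zero.2 (by omega)
  have hC : (0 : ℝ) < (n.choose m : ℝ) := by
    exact_mod_cast Nat.choose_pos hmn
  have hv1 : |v| = 1 := by rcases hv with h | h <;> simp [h]
  have hnat : n * (n - 1).choose (m - 1) = n.choose m * m := by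
    have h := Nat.add_one_mul_choose_eq (n - 1) (m - 1)
    have h1 : n - 1 + 1 = n := by omega
    have h2 : m - 1 + 1 = m := by omega
    simpa [Nat.succ_eq_add_one, h1, h2] using h
  have hkey : (n : ℝ) / (n.choose m : ℝ) * ((m : ℝ)⁻¹ * ((n - 1).choose (m - 1) : ℝ)) = 1 := by
    have : (n : ℝ) * ((n - 1).choose (m - 1) : ℝ) = (n.choose m : ℝ) * m := by
      exact_mod_cast hnat
    field_simp
    linarith
  unfold subsamplingRate
  rw [← mul_sub, ← Finset.sum_sub_distrib, abs_mul,
    abs_of_nonneg (by positivity : (0:ℝ) ≤ (n : ℝ) / (n.choose m : ℝ))]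
  have hstep : ∀ S ∈ Finset.powersetCard m (Finset.range n),
      |max (v * ((m : ℝ)⁻¹ * ∑ j ∈ S, a j)) 0 - max (v * ((m : ℝ)⁻¹ * ∑ j ∈ S, b j)) 0|
        ≤ (m : ℝ)⁻¹ * ∑ j ∈ S, |a j - b j| := by
    intro S hS
    calc |max (v * ((m : ℝ)⁻¹ * ∑ j ∈ S, a j)) 0 - max (v * ((m : ℝ)⁻¹ * ∑ j ∈ S, b j)) 0|
        ≤ |v * ((m : ℝ)⁻¹ * ∑ j ∈ S, a j) - v * ((m : ℝ)⁻¹ * ∑ j ∈ S, b j)| :=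
          abs_max_sub_max_le_abs _ _ _
      _ = (m : ℝ)⁻¹ * |∑ j ∈ S, (a j - b j)| := by
          rw [← mul_sub, ← mul_sub, abs_mul, abs_mul, hv1, one_mul, Finset.sum_sub_distrib,
            abs_of_nonneg (by positivity : (0:ℝ) ≤ (m : ℝ)⁻¹)]
      _ ≤ (m : ℝ)⁻¹ * ∑ j ∈ S, |a j - b j| := by
          gcongr
          exact Finset.abs_sum_le_sum_abs _ _
  calc (n : ℝ) / (n.choose m : ℝ) *
        |∑ S ∈ Finset.powersetCard m (Finset.range n),
          (max (v * ((m : ℝ)⁻¹ * ∑ j ∈ S, a j)) 0 - max (v * ((m : ℝ)⁻¹ * ∑ j ∈ S, b j)) 0)|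
      ≤ (n : ℝ) / (n.choose m : ℝ) *
        ∑ S ∈ Finset.powersetCard m (Finset.range n),
          ((m : ℝ)⁻¹ * ∑ j ∈ S, |a j - b j|) := by
        gcongr
        exact le_trans (Finset.abs_sum_le_sum_abs _ _) (Finset.sum_le_sum hstep)
    _ = ∑ j ∈ Finset.range n, |a j - b j| := by
        rw [← Finset.mul_sum, double_count n m hm, ← mul_assoc, ← mul_assoc,
          mul_assoc ((n : ℝ) / (n.choose m : ℝ)), hkey, one_mul]
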